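/- For n ≥ 3, let 2C_n be the graph obtained from a cycle of length n by doubling every edge, and let B_n consist of two edge-disjoint Hamiltonian cycles of 2C_n. Then for distinct m ≠ n, the biased graph (2C_m, B_m) is not a minor of (2C_n, B_n): deleting or contracting any edge of (2C_n, B_n) yields a biased graph with at most one balanced cycle, and at most one balanced cycle persists under all further minor operations, while (2C_m, B_m) has exactly two balanced cycles. -/

import Mathlib

open scoped Classical

/-- A multigraph with a fixed orientation of each edge. -/
structure Multigraph (V E : Type*) where
  src : E → V
  tgt : E → V

namespace Multigraph

variable {V E : Type*}

/-- A step of a walk: an edge together with a direction (`true` = forward). -/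
abbrev Step (E : Type*) := E × Bool

def stepSrc (G : Multigraph V E) (s : Step E) : V :=
  if s.2 then G.src s.1 else G.tgt s.1

def stepTgt (G : Multigraph V E) (s : Step E) : V :=
  if s.2 then G.tgt s.1 else G.src s.1

/-- A walk: consecutive steps match up. -/
def IsWalk (G : Multigraph V E) (W : List (Step E)) : Prop :=
  W.Chain' fun s t => G.stepTgt s = G.stepSrc t

def IsClosedWalk (G : Multigraph V E) (W : List (Step E)) : Prop :=
  W ≠ [] ∧ G.IsWalk W ∧ W.getLast?.map G.stepTgt = W.head?.map G.stepSrc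

/-- A simple closed walk, i.e. a walk once around a cycle: no repeated
edges and no repeated vertices. -/
def IsCycleWalk (G : Multigraph V E) (W : List (Step E)) : Prop :=
  G.IsClosedWalk W ∧ (W.map Prod.fst).Nodup ∧ (W.map G.stepSrc).Nodup

def edgesOf [DecidableEq E] (W : List (Step E)) : Finset E :=
  (W.map Prod.fst).toFinset

/-- A cycle, identified with its edge set. -/
def IsCycle (G : Multigraph V E) [DecidableEq E] (C : Finset E) : Prop :=
  ∃ W, G.IsCycleWalk W ∧ edgesOf W = C

/-- A path from `x` to `y`: a walk with no repeated vertices. -/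
def IsPath (G : Multigraph V E) (x y : V) (P : List (Step E)) : Prop :=
  P ≠ [] ∧ G.IsWalk P ∧ P.head?.map G.stepSrc = some x ∧
    P.getLast?.map G.stepTgt = some y ∧ (P.map G.stepSrc ++ [y]).Nodup

/-- A theta subgraph: two distinct vertices `x, y` joined by three internally
disjoint paths. -/
def IsTheta (G : Multigraph V E) (x y : V) (P₁ P₂ P₃ : List (Step E)) : Prop :=
  x ≠ y ∧ G.IsPath x y P₁ ∧ G.IsPath x y P₂ ∧ G.IsPath x y P₃ ∧
    ((P₁.map G.stepSrc).tail).Disjoint ((P₂.map G.stepSrc).tail) ∧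
    ((P₁.map G.stepSrc).tail).Disjoint ((P₃.map G.stepSrc).tail) ∧
    ((P₂.map G.stepSrc).tail).Disjoint ((P₃.map G.stepSrc).tail) ∧
    (P₁.map Prod.fst).Disjoint (P₂.map Prod.fst) ∧
    (P₁.map Prod.fst).Disjoint (P₃.map Prod.fst) ∧
    (P₂.map Prod.fst).Disjoint (P₃.map Prod.fst)

/-- The theta property for a collection `B` of (edge sets of) cycles:
no theta subgraph contains exactly two members of `B`. -/
def ThetaProperty (G : Multigraph V E) [DecidableEq E] (B : Set (Finset E)) : Prop :=
  ∀ x y P₁ P₂ P₃, G.IsTheta x y P₁ P₂ P₃ →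
    ¬ ((edgesOf (P₁ ++ P₂) ∈ B ∧ edgesOf (P₁ ++ P₃) ∈ B ∧ edgesOf (P₂ ++ P₃) ∉ B) ∨
       (edgesOf (P₁ ++ P₂) ∈ B ∧ edgesOf (P₂ ++ P₃) ∈ B ∧ edgesOf (P₁ ++ P₃) ∉ B) ∨
       (edgesOf (P₁ ++ P₃) ∈ B ∧ edgesOf (P₂ ++ P₃) ∈ B ∧ edgesOf (P₁ ++ P₂) ∉ B))

/-- The label of a walk in a group-labelled graph. -/
def wlabel {Γ : Type*} [Group Γ] (φ : E → Γ) (W : List (Step E)) : Γ :=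
  (W.map fun s => if s.2 then φ s.1 else (φ s.1)⁻¹).prod

/-- The balanced cycles of a group labelling: cycles some (hence every) simple
closed walk around which has label `1`. -/
def BalancedCycles (G : Multigraph V E) [DecidableEq E] {Γ : Type*} [Group Γ]
    (φ : E → Γ) : Set (Finset E) :=
  {C | ∃ W, G.IsCycleWalk W ∧ edgesOf W = C ∧ wlabel φ W = 1}

/-- Reversal of a walk. -/
def revWalk (W : List (Step E)) : List (Step E) :=
  (W.map fun s => (s.1, !s.2)).reverse

/-- Deletion of an edge. -/
def delete (G : Multigraph V E) (e : E) : Multigraph V {f : E // f ≠ e} where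
  src f := G.src f.1
  tgt f := G.tgt f.1

/-- Contraction of a (non-loop) edge: the head of `e` is identified with its tail. -/
noncomputable def contract (G : Multigraph V E) (e : E) :
    Multigraph V {f : E // f ≠ e} where
  src f := if G.src f.1 = G.tgt e then G.src e else G.src f.1
  tgt f := if G.tgt f.1 = G.tgt e then G.src e else G.tgt f.1

/-- The biased graph obtained by deleting `e`: balanced cycles are the
balanced cycles avoiding `e`. -/
def deleteBias (G : Multigraph V E) [DecidableEq E] (B : Set (Finset E)) (e : E) :
    Set (Finset {f : E // f ≠ e}) :=
  {C | (G.delete e).IsCycle C ∧ C.image Subtype.val ∈ B}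

/-- The biased graph obtained by contracting `e`: a cycle `C` of `G/e` is
balanced iff `C ∈ B` or `E(C) ∪ {e}` is the edge set of a cycle of `B`. -/
noncomputable def contractBias (G : Multigraph V E) [DecidableEq E]
    (B : Set (Finset E)) (e : E) : Set (Finset {f : E // f ≠ e}) :=
  {C | (G.contract e).IsCycle C ∧
    (C.image Subtype.val ∈ B ∨ insert e (C.image Subtype.val) ∈ B)}

/-- `Γ`-labellability of a biased graph (with respect to the fixed orientation). -/
def GLabellable (G : Multigraph V E) [DecidableEq E] (Γ : Type*) [Group Γ]
    (B : Set (Finset E)) : Prop :=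
  ∃ φ : E → Γ, B = G.BalancedCycles φ

end Multigraph

/-- A bundled biased graph. -/
structure BiasedGraph where
  V : Type
  E : Type
  G : Multigraph V E
  B : Set (Finset E)

namespace BiasedGraph

/-- Deletion of an edge in a biased graph. -/
noncomputable def del (X : BiasedGraph) (e : X.E) : BiasedGraph := by
  classical
  exact { V := X.V, E := {f : X.E // f ≠ e}, G := X.G.delete e,
          B := X.G.deleteBias X.B e }

/-- Contraction of an edge in a biased graph. -/
noncomputable def con (X : BiasedGraph) (e : X.E) : BiasedGraph := by
  classical
  exact { V := X.V, E := {f : X.E // f ≠ e}, G := X.G.contract e,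
          B := X.G.contractBias X.B e }

/-- A single minor operation: deletion of any edge (which also covers
contraction of a balanced loop), or contraction of a non-loop edge. -/
inductive MinorStep : BiasedGraph → BiasedGraph → Prop
  | del (X : BiasedGraph) (e : X.E) : MinorStep (X.del e) X
  | con (X : BiasedGraph) (e : X.E) (he : X.G.src e ≠ X.G.tgt e) :
      MinorStep (X.con e) X

/-- Isomorphism of biased graphs: bijections of vertices and edges preserving
(unordered) incidence and the balanced cycles. -/
def Iso (X Y : BiasedGraph) : Prop := by
  classical
  exact ∃ (α : X.V ≃ Y.V) (β : X.E ≃ Y.E),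
    (∀ e, ({Y.G.src (β e), Y.G.tgt (β e)} : Set Y.V) =
      {α (X.G.src e), α (X.G.tgt e)}) ∧
    ∀ C : Finset X.E, C ∈ X.B ↔ C.image β ∈ Y.B

/-- The minor order on biased graphs: `X` is a minor of `Y` if `X` is
isomorphic to a biased graph obtained from `Y` by a sequence of deletions and
contractions. -/
def IsMinor (X Y : BiasedGraph) : Prop :=
  ∃ Z : BiasedGraph, Relation.ReflTransGen MinorStep Z Y ∧ X.Iso Z

end BiasedGraph

/-- The biased graph `(2Cₙ, 𝓑ₙ)`: the cycle of length `n` with every edge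
doubled, where the balanced cycles are the two edge-disjoint Hamiltonian
cycles (the `false` copies and the `true` copies of the edges). -/
def twoC (n : ℕ) (hn : 3 ≤ n) : BiasedGraph := by
  classical
  haveI : NeZero n := ⟨by omega⟩
  exact
    { V := Fin n, E := Fin n × Bool,
      G := { src := fun p => p.1, tgt := fun p => p.1 + 1 },
      B := { Finset.univ.image (fun i : Fin n => (i, false)),
             Finset.univ.image (fun i : Fin n => (i, true)) } }


section Aux

open Multigraph

/-- Images under `Subtype.val` determine finsets of a subtype. -/
lemma aux_image_val_inj {E : Type*} {e : E} [DecidableEq E]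
    {C D : Finset {f : E // f ≠ e}}
    (h : C.image Subtype.val = D.image Subtype.val) : C = D :=
  Finset.image_injective Subtype.val_injective h

lemma aux_not_mem_image_val {E : Type*} {e : E} [DecidableEq E]
    (C : Finset {f : E // f ≠ e}) :
    e ∉ C.image Subtype.val := by
  simp only [Finset.mem_image, not_exists]
  rintro x ⟨hx, hxe⟩
  exact x.prop hxe

lemma aux_minorStep_subsingleton {X Y : BiasedGraph} (h : BiasedGraph.MinorStep X Y)
    (hY : Y.B.Subsingleton) : X.B.Subsingleton := by
  classical
  cases h with
  | del Y e =>
    intro C hC D hD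
    have hC' : ((Y.G.delete e).IsCycle C ∧ C.image Subtype.val ∈ Y.B) := hC
    have hD' : ((Y.G.delete e).IsCycle D ∧ D.image Subtype.val ∈ Y.B) := hD
    exact aux_image_val_inj (hY hC'.2 hD'.2)
  | con Y e he =>
    intro C hC D hD
    have hC' : ((Y.G.contract e).IsCycle C ∧
        (C.image Subtype.val ∈ Y.B ∨ insert e (C.image Subtype.val) ∈ Y.B)) := hC
    have hD' : ((Y.G.contract e).IsCycle D ∧
        (D.image Subtype.val ∈ Y.B ∨ insert e (D.image Subtype.val) ∈ Y.B)) := hD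
    apply aux_image_val_inj
    rcases hC'.2 with h1 | h1 <;> rcases hD'.2 with h2 | h2
    · exact hY h1 h2
    · exfalso
      have h3 : e ∈ C.image Subtype.val := by
        rw [hY h1 h2]; exact Finset.mem_insert_self e _
      exact aux_not_mem_image_val C h3
    · exfalso
      have h3 : e ∈ D.image Subtype.val := by
        rw [hY h2 h1]; exact Finset.mem_insert_self e _
      exact aux_not_mem_image_val D h3
    · have h3 := hY h1 h2
      have h4 : (insert e (C.image Subtype.val)).erase e
          = (insert e (D.image Subtype.val)).erase e := by rw [h3]
      rwa [Finset.erase_insert (aux_not_mem_image_val C),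
        Finset.erase_insert (aux_not_mem_image_val D)] at h4

lemma aux_chain_subsingleton {Z Y : BiasedGraph}
    (h : Relation.ReflTransGen BiasedGraph.MinorStep Z Y) :
    Y.B.Subsingleton → Z.B.Subsingleton := by
  induction h with
  | refl => exact id
  | tail h1 h2 ih => exact fun hY => ih (aux_minorStep_subsingleton h2 hY)

lemma aux_mem_H_iff {n : ℕ} [NeZero n] (e : Fin n × Bool) (c : Bool) :
    e ∈ Finset.univ.image (fun i : Fin n => (i, c)) ↔ e.2 = c := by
  constructor
  · intro h
    obtain ⟨i, -, hi⟩ := Finset.mem_image.mp h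
    exact (congrArg Prod.snd hi).symm
  · intro h
    refine Finset.mem_image.mpr ⟨e.1, Finset.mem_univ _, ?_⟩
    cases e; cases h; rfl

lemma aux_H_card {n : ℕ} (c : Bool) :
    (Finset.univ.image (fun i : Fin n => (i, c))).card = n := by
  rw [Finset.card_image_of_injective _ (fun a b h => congrArg Prod.fst h)]
  simp

lemma aux_fin_ne_add_one {n : ℕ} (hn : 3 ≤ n) [NeZero n] (i : Fin n) : i ≠ i + 1 := by
  intro h
  have hv := congrArg Fin.val h
  rw [Fin.val_add, Fin.val_one'] at hv
  rw [Nat.mod_eq_of_lt (by omega : 1 < n)] at hv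
  have hlt := i.isLt
  by_cases hc : i.val + 1 < n
  · rw [Nat.mod_eq_of_lt hc] at hv; omega
  · have h2 : i.val + 1 = n := by omega
    rw [h2, Nat.mod_self] at hv
    omega

lemma aux_stepSrc_contract_ne {V E : Type*} (G : Multigraph V E) (e : E)
    (he : G.src e ≠ G.tgt e) (s : Multigraph.Step {f : E // f ≠ e}) :
    (G.contract e).stepSrc s ≠ G.tgt e := by
  simp only [Multigraph.stepSrc, Multigraph.contract]
  split <;> split <;> simp_all

lemma aux_contract_cycle_card {E : Type*} [DecidableEq E] {n : ℕ} [NeZero n]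
    (G : Multigraph (Fin n) E) (e : E) (he : G.src e ≠ G.tgt e)
    {C : Finset {f : E // f ≠ e}} (hC : (G.contract e).IsCycle C) :
    C.card ≠ n := by
  obtain ⟨W, ⟨hcl, hedge, hvert⟩, hE⟩ := hC
  intro hcard
  have hlen : W.length = n := by
    have h1 : (W.map Prod.fst).toFinset.card = n := by
      rw [show (W.map Prod.fst).toFinset = C from hE, hcard]
    rwa [List.toFinset_card_of_nodup hedge, List.length_map] at h1
  have hvl : (W.map ((G.contract e).stepSrc)).length = n := by
    rw [List.length_map, hlen]
  have huniv : (W.map ((G.contract e).stepSrc)).toFinset = Finset.univ := by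
    apply Finset.eq_univ_of_card
    rw [List.toFinset_card_of_nodup hvert, hvl, Fintype.card_fin]
  have hmem : G.tgt e ∈ W.map ((G.contract e).stepSrc) := by
    rw [← List.mem_toFinset, huniv]; exact Finset.mem_univ _
  obtain ⟨s, -, hs⟩ := List.mem_map.mp hmem
  exact aux_stepSrc_contract_ne G e he s hs

lemma twoC_del_subsingleton (n : ℕ) (hn : 3 ≤ n) (e : (twoC n hn).E) :
    ((twoC n hn).del e).B.Subsingleton := by
  classical
  haveI : NeZero n := ⟨by omega⟩
  intro C hC D hD
  have hC' : (((twoC n hn).G.delete e).IsCycle C ∧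
      C.image Subtype.val ∈ ({Finset.univ.image (fun i : Fin n => (i, false)),
        Finset.univ.image (fun i : Fin n => (i, true))} :
        Set (Finset (Fin n × Bool)))) := hC
  have hD' : (((twoC n hn).G.delete e).IsCycle D ∧
      D.image Subtype.val ∈ ({Finset.univ.image (fun i : Fin n => (i, false)),
        Finset.univ.image (fun i : Fin n => (i, true))} :
        Set (Finset (Fin n × Bool)))) := hD
  have key : ∀ (c : Bool) (X : Finset {f : (twoC n hn).E // f ≠ e}),
      X.image Subtype.val = Finset.univ.image (fun i : Fin n => (i, c)) → e.2 ≠ c := by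
    intro c X h hc
    have h2 : e ∈ X.image Subtype.val := by
      rw [h]; exact (aux_mem_H_iff e c).mpr hc
    exact aux_not_mem_image_val X h2
  have hCB := hC'.2
  have hDB := hD'.2
  replace hCB : C.image Subtype.val = Finset.univ.image (fun i : Fin n => (i, false)) ∨ C.image Subtype.val = Finset.univ.image (fun i : Fin n => (i, true)) := hCB
  replace hDB : D.image Subtype.val = Finset.univ.image (fun i : Fin n => (i, false)) ∨ D.image Subtype.val = Finset.univ.image (fun i : Fin n => (i, true)) := hDB
  rcases hCB with h1 | h1 <;> rcases hDB with h2 | h2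
  · exact aux_image_val_inj (h1.trans h2.symm)
  · exact ((Bool.eq_false_or_eq_true e.2).elim (key true D h2) (key false C h1)).elim
  · exact ((Bool.eq_false_or_eq_true e.2).elim (key true C h1) (key false D h2)).elim
  · exact aux_image_val_inj (h1.trans h2.symm)

lemma twoC_con_subsingleton (n : ℕ) (hn : 3 ≤ n) (e : (twoC n hn).E) :
    ((twoC n hn).con e).B.Subsingleton := by
  classical
  haveI : NeZero n := ⟨by omega⟩
  intro C hC D hD
  have hC' : (((twoC n hn).G.contract e).IsCycle C ∧
      (C.image Subtype.val ∈ ({Finset.univ.image (fun i : Fin n => (i, false)),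
        Finset.univ.image (fun i : Fin n => (i, true))} :
        Set (Finset (Fin n × Bool))) ∨
       insert e (C.image Subtype.val) ∈
        ({Finset.univ.image (fun i : Fin n => (i, false)),
          Finset.univ.image (fun i : Fin n => (i, true))} :
          Set (Finset (Fin n × Bool))))) := hC
  have hD' : (((twoC n hn).G.contract e).IsCycle D ∧
      (D.image Subtype.val ∈ ({Finset.univ.image (fun i : Fin n => (i, false)),
        Finset.univ.image (fun i : Fin n => (i, true))} :
        Set (Finset (Fin n × Bool))) ∨
       insert e (D.image Subtype.val) ∈
        ({Finset.univ.image (fun i : Fin n => (i, false)),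
          Finset.univ.image (fun i : Fin n => (i, true))} :
          Set (Finset (Fin n × Bool))))) := hD
  have he : (twoC n hn).G.src e ≠ (twoC n hn).G.tgt e := aux_fin_ne_add_one hn e.1
  -- the first disjunct is impossible: such a cycle would need n edges
  have hno : ∀ (X : Finset {f : (twoC n hn).E // f ≠ e}),
      ((twoC n hn).G.contract e).IsCycle X →
      X.image Subtype.val ∉ ({Finset.univ.image (fun i : Fin n => (i, false)),
        Finset.univ.image (fun i : Fin n => (i, true))} :
        Set (Finset (Fin n × Bool))) := by
    intro X hX hmem
    have hcard : X.card = n := by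
      replace hmem : X.image Subtype.val = Finset.univ.image (fun i : Fin n => (i, false)) ∨ X.image Subtype.val = Finset.univ.image (fun i : Fin n => (i, true)) := hmem
      rcases hmem with h | h <;>
      · have h2 := congrArg Finset.card h
        rw [Finset.card_image_of_injective _ Subtype.val_injective] at h2
        exact h2.trans (aux_H_card _)
    exact aux_contract_cycle_card (twoC n hn).G e he hX hcard
  have hCins := (hC'.2).resolve_left (hno C hC'.1)
  have hDins := (hD'.2).resolve_left (hno D hD'.1)
  have key : ∀ (c : Bool) (X : Finset {f : (twoC n hn).E // f ≠ e}),
      insert e (X.image Subtype.val) = Finset.univ.image (fun i : Fin n => (i, c)) →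
        e.2 = c := by
    intro c X h
    apply (aux_mem_H_iff e c).mp
    rw [← h]
    exact Finset.mem_insert_self e _
  replace hCins : insert e (C.image Subtype.val) = Finset.univ.image (fun i : Fin n => (i, false)) ∨ insert e (C.image Subtype.val) = Finset.univ.image (fun i : Fin n => (i, true)) := hCins
  replace hDins : insert e (D.image Subtype.val) = Finset.univ.image (fun i : Fin n => (i, false)) ∨ insert e (D.image Subtype.val) = Finset.univ.image (fun i : Fin n => (i, true)) := hDins
  have key2 : insert e (C.image Subtype.val) = insert e (D.image Subtype.val) := by
    rcases hCins with h1 | h1 <;> rcases hDins with h2 | h2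
    · rw [h1, h2]
    · exact Bool.noConfusion ((key false C h1).symm.trans (key true D h2))
    · exact Bool.noConfusion ((key false D h2).symm.trans (key true C h1))
    · rw [h1, h2]
  apply aux_image_val_inj
  have h4 : (insert e (C.image Subtype.val)).erase e
      = (insert e (D.image Subtype.val)).erase e := by rw [key2]
  rwa [Finset.erase_insert (aux_not_mem_image_val C),
    Finset.erase_insert (aux_not_mem_image_val D)] at h4

end Aux

/-- For distinct `m ≠ n` (both at least 3), the biased graph
`(2C_m, 𝓑_m)` is not a minor of `(2C_n, 𝓑_n)`. -/
theorem twoC_not_minor (m n : ℕ) (hm : 3 ≤ m) (hn : 3 ≤ n) (hmn : m ≠ n) :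
    ¬ (twoC m hm).IsMinor (twoC n hn) := by
  classical
  rintro ⟨Z, hchain, hiso⟩
  unfold BiasedGraph.Iso at hiso
  obtain ⟨α, β, -, hB⟩ := hiso
  rcases Relation.ReflTransGen.cases_tail hchain with heq | ⟨c, hZc, hstep⟩
  · subst heq
    have α' : Fin m ≃ Fin n := α
    have : m = n := by simpa using Fintype.card_congr α'
    exact hmn this
  · have hsub : c.B.Subsingleton := by
      cases hstep with
      | del X e => exact twoC_del_subsingleton n hn e
      | con X e he => exact twoC_con_subsingleton n hn e
    have hZsub : Z.B.Subsingleton := aux_chain_subsingleton hZc hsub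
    haveI : NeZero m := ⟨by omega⟩
    have hHf : (Finset.univ.image (fun i : Fin m => (i, false))) ∈ (twoC m hm).B :=
      Or.inl rfl
    have hHt : (Finset.univ.image (fun i : Fin m => (i, true))) ∈ (twoC m hm).B :=
      Or.inr rfl
    have h1 := (hB _).mp hHf
    have h2 := (hB _).mp hHt
    have h3 := hZsub h1 h2
    have hft : (Finset.univ.image (fun i : Fin m => (i, false)))
        = (Finset.univ.image (fun i : Fin m => (i, true))) :=
      Finset.image_injective β.injective h3
    have hcontra : ((0 : Fin m), false)
        ∈ Finset.univ.image (fun i : Fin m => (i, true)) := by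
      rw [← hft]; exact Finset.mem_image.mpr ⟨0, Finset.mem_univ _, rfl⟩
    obtain ⟨i, -, hi⟩ := Finset.mem_image.mp hcontra
    exact Bool.noConfusion (congrArg Prod.snd hi)
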